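/- The set Π = {(x,y,z,t) ∈ ℝ⁴ : y < x²} is open and two-convex: whenever three of the four faces of a 3-simplex lie in Π, the whole simplex lies in Π. -/

import Mathlib

open Finset

section Aux

lemma mem_hull_iff {n : ℕ} {E : Type*} [AddCommGroup E] [Module ℝ E] (v : Fin n → E) (x : E) :
    x ∈ convexHull ℝ (Set.range v) ↔
      ∃ w : Fin n → ℝ, (∀ i, 0 ≤ w i) ∧ ∑ i, w i = 1 ∧ ∑ i, w i • v i = x := by
  rw [convexHull_range_eq_exists_affineCombination]
  constructor
  · rintro ⟨s, w, hw0, hw1, rfl⟩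
    refine ⟨fun i => if i ∈ s then w i else 0,
      fun i => by by_cases h : i ∈ s <;> simp [h, hw0 i] , ?_, ?_⟩
    · rw [Finset.sum_ite_mem, Finset.univ_inter]; exact hw1
    · rw [Finset.affineCombination_eq_linear_combination s v w hw1]
      simp only [ite_smul, zero_smul]
      rw [Finset.sum_ite_mem, Finset.univ_inter]
  · rintro ⟨w, hw0, hw1, rfl⟩
    exact ⟨Finset.univ, w, fun i _ => hw0 i, by simpa using hw1,
      by rw [Finset.affineCombination_eq_linear_combination _ v w (by simpa using hw1)]⟩

lemma zero_weight_mem {n : ℕ} {E : Type*} [AddCommGroup E] [Module ℝ E] (v : Fin n → E)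
    (w : Fin n → ℝ) (h0 : ∀ i, 0 ≤ w i) (h1 : ∑ i, w i = 1) (i : Fin n) (hi : w i = 0)
    (S : Set E) (hS : ∀ j, j ≠ i → v j ∈ S) : ∑ j, w j • v j ∈ convexHull ℝ S := by
  have he : ∑ j ∈ Finset.univ.erase i, w j • v j = ∑ j, w j • v j :=
    Finset.sum_erase _ (by simp [hi])
  have he1 : ∑ j ∈ Finset.univ.erase i, w j = 1 := by
    rw [Finset.sum_erase _ hi]; exact h1
  rw [← he, ← Finset.centerMass_eq_of_sum_1 _ v he1]
  exact Finset.centerMass_mem_convexHull _ (fun j _ => h0 j) (by rw [he1]; norm_num)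
    (fun j hj => hS j (Finset.mem_erase.1 hj).1)

lemma esum_apply {k : ℕ} (w : Fin k → ℝ) (v : Fin k → EuclideanSpace ℝ (Fin 4)) (j : Fin 4) :
    (∑ i, w i • v i) j = ∑ i, w i * v i j := by
  have h := map_sum (EuclideanSpace.proj j : EuclideanSpace ℝ (Fin 4) →L[ℝ] ℝ)
    (fun i => w i • v i) Finset.univ
  simp only [map_smul, smul_eq_mul, PiLp.proj_apply] at h
  convert h using 2


lemma key {n : ℕ} (hn : 3 ≤ n) (v : Fin n → ℝ × ℝ)
    (H : ∀ w : Fin n → ℝ, (∀ i, 0 ≤ w i) → ∑ i, w i = 1 → (∃ i, w i = 0) →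
      (∑ i, w i • v i).2 < (∑ i, w i • v i).1 ^ 2) :
    ∀ x ∈ convexHull ℝ (Set.range v), x.2 < x.1 ^ 2 := by
  intro x hx
  by_contra hxP
  push_neg at hxP   -- x.1 ^ 2 ≤ x.2
  have i₀ : Fin n := ⟨0, by omega⟩
  by_cases hcol : Collinear ℝ (Set.range v)
  · -- collinear case
    rw [collinear_iff_of_mem (Set.mem_range_self i₀)] at hcol
    obtain ⟨dir, hdir⟩ := hcol
    choose t ht using fun i => hdir (v i) (Set.mem_range_self i)
    simp only [vadd_eq_add] at ht
    obtain ⟨imin, -, hmin⟩ := Finset.exists_min_image Finset.univ t ⟨i₀, Finset.mem_univ _⟩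
    obtain ⟨imax, -, hmax⟩ := Finset.exists_max_image Finset.univ t ⟨i₀, Finset.mem_univ _⟩
    have hseg : ∀ i, v i ∈ segment ℝ (v imin) (v imax) := by
      intro i
      rcases eq_or_ne (t imax) (t imin) with he | hne
      · have : v i = v imin := by
          rw [ht i, ht imin]
          have h1 : t imin ≤ t i := hmin i (Finset.mem_univ _)
          have h2 : t i ≤ t imax := hmax i (Finset.mem_univ _)
          have : t i = t imin := le_antisymm (he ▸ h2) h1
          rw [this]
        rw [this]; exact left_mem_segment _ _ _
      · have hD : t imax - t imin ≠ 0 := sub_ne_zero.2 hne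
        set θ : ℝ := (t imax - t i) / (t imax - t imin) with hθ
        have h1 : t imin ≤ t i := hmin i (Finset.mem_univ _)
        have h2 : t i ≤ t imax := hmax i (Finset.mem_univ _)
        have hDpos : 0 < t imax - t imin := lt_of_le_of_ne (by linarith) (Ne.symm hD)
        have hθ0 : 0 ≤ θ := div_nonneg (by linarith) (by linarith)
        have hθ1 : θ ≤ 1 := by
          rw [div_le_one hDpos]; linarith
        refine ⟨θ, 1 - θ, hθ0, by linarith, by ring, ?_⟩
        have hsc : θ * t imin + (1 - θ) * t imax = t i := by
          have hθD : θ * (t imax - t imin) = t imax - t i := by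
            rw [hθ]; exact div_mul_cancel₀ _ hD
          linear_combination (-1 : ℝ) * hθD
        rw [ht i, ht imin, ht imax, ← hsc]
        module
    have hxseg : x ∈ segment ℝ (v imin) (v imax) := by
      have : convexHull ℝ (Set.range v) ⊆ segment ℝ (v imin) (v imax) :=
        convexHull_min (by rintro p ⟨i, rfl⟩; exact hseg i) (convex_segment _ _)
      exact this hx
    obtain ⟨θ1, θ2, hθ1, hθ2, hsum, hxe⟩ := hxseg
    set w : Fin n → ℝ := fun j => (if j = imin then θ1 else 0) + (if j = imax then θ2 else 0)
      with hw
    have hw0 : ∀ j, 0 ≤ w j := by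
      intro j; dsimp [w]
      apply add_nonneg <;> split <;> simp [hθ1, hθ2]
    have hw1 : ∑ j, w j = 1 := by
      simp [w, Finset.sum_add_distrib, Finset.sum_ite_eq', hsum]
    have hwv : ∑ j, w j • v j = x := by
      simp only [w, add_smul, ite_smul, zero_smul, Finset.sum_add_distrib,
        Finset.sum_ite_eq', Finset.mem_univ, if_true]
      exact hxe
    have hz : ∃ j, w j = 0 := by
      have hcard : (({imin, imax} : Finset (Fin n))).card ≤ 2 := by
        apply le_trans (Finset.card_insert_le _ _); simp
      have : ¬ (Finset.univ : Finset (Fin n)) ⊆ {imin, imax} := by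
        intro hsub
        have := Finset.card_le_card hsub
        simp only [Finset.card_univ, Fintype.card_fin] at this
        omega
      obtain ⟨j, -, hj⟩ := Finset.not_subset.1 this
      refine ⟨j, ?_⟩
      simp only [Finset.mem_insert, Finset.mem_singleton, not_or] at hj
      simp [w, hj.1, hj.2]
    have := H w hw0 hw1 hz
    rw [hwv] at this
    linarith
  · -- noncollinear case
    have hT : IsCompact (convexHull ℝ (Set.range v)) :=
      (Set.finite_range v).isCompact_convexHull (𝕜 := ℝ)
    have hK : IsCompact (convexHull ℝ (Set.range v) ∩ {q : ℝ × ℝ | q.1 = x.1}) :=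
      hT.inter_right (isClosed_eq continuous_fst continuous_const)
    have hKne : (convexHull ℝ (Set.range v) ∩ {q : ℝ × ℝ | q.1 = x.1}).Nonempty :=
      ⟨x, hx, rfl⟩
    obtain ⟨R, hRK, hRmax⟩ := hK.exists_isMaxOn hKne (continuous_snd.continuousOn)
    obtain ⟨hRT, hRx⟩ := hRK
    have hR2 : x.2 ≤ R.2 := hRmax ⟨hx, rfl⟩
    have hRnot : R.1 ^ 2 ≤ R.2 := by
      have : R.1 = x.1 := hRx
      rw [this]; linarith
    obtain ⟨w, hw0, hw1, hwv⟩ := (mem_hull_iff v R).1 hRT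
    by_cases hz : ∃ i, w i = 0
    · have := H w hw0 hw1 hz
      rw [hwv] at this; linarith
    · push_neg at hz
      have wpos : ∀ i, 0 < w i := fun i => lt_of_le_of_ne (hw0 i) (Ne.symm (hz i))
      -- find three points witnessing noncollinearity
      have ha₁ : ∃ a₁, v a₁ ≠ v i₀ := by
        by_contra h
        push_neg at h
        refine hcol (Collinear.subset ?_ (collinear_singleton ℝ (v i₀)))
        rintro p ⟨i, rfl⟩; simp [h i]
      obtain ⟨a₁, ha₁⟩ := ha₁
      have hncol := hcol
      rw [collinear_iff_of_mem (Set.mem_range_self i₀)] at hncol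
      push_neg at hncol
      obtain ⟨p₂, ⟨a₂, rfl⟩, h₂⟩ := hncol (v a₁ - v i₀)
      simp only [vadd_eq_add] at h₂
      set dir := v a₁ - v i₀ with hdirdef
      set u := v a₂ - v i₀ with hudef
      have hdirne : dir ≠ 0 := sub_ne_zero.2 ha₁
      set D : ℝ := dir.1 * u.2 - dir.2 * u.1 with hD
      have hDne : D ≠ 0 := by
        intro hD0
        rcases eq_or_ne dir.1 0 with h1 | h1
        · have h2 : dir.2 ≠ 0 := by
            intro h2; apply hdirne; exact Prod.ext h1 h2
          have hu1 : u.1 = 0 := by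
            have : dir.2 * u.1 = 0 := by rw [hD] at hD0; rw [h1] at hD0; linarith
            exact (mul_eq_zero.1 this).resolve_left h2
          apply h₂ (u.2 / dir.2)
          have : (u.2 / dir.2) • dir + v i₀ = u + v i₀ := by
            congr 1
            ext
            · simp [h1, hu1]
            · simp [Prod.smul_snd]; field_simp
          rw [this, hudef]; abel
        · apply h₂ (u.1 / dir.1)
          have : (u.1 / dir.1) • dir + v i₀ = u + v i₀ := by
            congr 1
            ext
            · simp; field_simp
            · simp
              rw [hD] at hD0
              field_simp
              nlinarith [hD0]
          rw [this, hudef]; abel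
      -- solve for s, t with s • dir + t • u = (0, 1)
      set s : ℝ := -u.1 / D with hs
      set t : ℝ := dir.1 / D with ht
      have hst : s • dir + t • u = ((0 : ℝ), (1 : ℝ)) := by
        ext
        · simp [hs, ht, Prod.smul_fst]
          field_simp
          ring
        · simp [hs, ht, Prod.smul_snd]
          field_simp
          ring
      -- distinctness
      have ha₁i₀ : a₁ ≠ i₀ := fun h => ha₁ (by rw [h])
      have ha₂i₀ : a₂ ≠ i₀ := by
        intro h
        apply h₂ 0
        rw [h]; simp
      have ha₂a₁ : a₂ ≠ a₁ := by
        intro h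
        apply h₂ 1
        rw [h, one_smul, hdirdef]; abel
      clear_value dir u D
      set c : Fin n → ℝ := fun j =>
        (if j = a₁ then s else 0) + (if j = a₂ then t else 0) + (if j = i₀ then -(s+t) else 0)
        with hc
      have hc0 : ∑ j, c j = 0 := by
        simp only [hc, Finset.sum_add_distrib, Finset.sum_ite_eq', Finset.mem_univ, if_true]
        ring
      have hcv : ∑ j, c j • v j = ((0:ℝ), (1:ℝ)) := by
        simp only [hc, add_smul, ite_smul, zero_smul, Finset.sum_add_distrib,
          Finset.sum_ite_eq', Finset.mem_univ, if_true]
        rw [← hst, hdirdef, hudef]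
        module
      clear_value s t
      set m : ℝ := min (w i₀) (min (w a₁) (w a₂)) with hm
      have hm0 : 0 < m := lt_min (wpos i₀) (lt_min (wpos a₁) (wpos a₂))
      have hmle₀ : m ≤ w i₀ := min_le_left _ _
      have hmle₁ : m ≤ w a₁ := le_trans (min_le_right _ _) (min_le_left _ _)
      have hmle₂ : m ≤ w a₂ := le_trans (min_le_right _ _) (min_le_right _ _)
      clear_value m
      set M : ℝ := |s| + |t| + 1 with hM
      have hM0 : 0 < M := by positivity
      set ε : ℝ := m / M with hε
      have hε0 : 0 < ε := div_pos hm0 hM0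
      have hεM : ε * M = m := by
        rw [hε]; field_simp
      have hexp : ε * |s| + ε * |t| + ε = m := by rw [← hεM, hM]; ring
      clear_value ε
      have habs0 : 0 ≤ ε * |s| := mul_nonneg hε0.le (abs_nonneg s)
      have habt0 : 0 ≤ ε * |t| := mul_nonneg hε0.le (abs_nonneg t)
      have hεs : ε * |s| < m := by linarith
      have hεt : ε * |t| < m := by linarith
      have hεst : ε * |s| + ε * |t| < m := by linarith
      have hsb : ε * -|s| ≤ ε * s := mul_le_mul_of_nonneg_left (neg_abs_le s) hε0.le
      have htb : ε * -|t| ≤ ε * t := mul_le_mul_of_nonneg_left (neg_abs_le t) hε0.le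
      have hstb : ε * -(|s| + |t|) ≤ ε * -(s + t) := by
        apply mul_le_mul_of_nonneg_left _ hε0.le
        have h1 := abs_add_le s t
        have h2 := le_abs_self (s + t)
        linarith
      set w' : Fin n → ℝ := fun j => w j + ε * c j with hw'
      have h0' : ∀ j, 0 ≤ w' j := by
        intro j
        show 0 ≤ w j + ε * c j
        rcases eq_or_ne j a₁ with rfl | hj1
        · have hcj : c j = s := by simp [hc, ha₂a₁.symm, ha₁i₀]
          rw [hcj]; linarith
        rcases eq_or_ne j a₂ with rfl | hj2
        · have hcj : c j = t := by simp [hc, hj1, ha₂i₀]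
          rw [hcj]; linarith
        rcases eq_or_ne j i₀ with rfl | hj0
        · have hcj : c j = -(s+t) := by simp [hc, hj1, hj2]
          rw [hcj]
          linarith
        · have hcj : c j = 0 := by simp [hc, hj1, hj2, hj0]
          rw [hcj]
          have := hw0 j
          linarith
      have h1' : ∑ j, w' j = 1 := by
        rw [hw']
        rw [Finset.sum_add_distrib, ← Finset.mul_sum, hc0, hw1]
        ring
      have hv' : ∑ j, w' j • v j = R + ε • ((0:ℝ), (1:ℝ)) := by
        rw [hw']
        simp only [add_smul, Finset.sum_add_distrib, hwv, mul_smul]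
        rw [← Finset.smul_sum, hcv]
      have hyT : R + ε • ((0:ℝ), (1:ℝ)) ∈ convexHull ℝ (Set.range v) :=
        (mem_hull_iff v _).2 ⟨w', h0', h1', hv'⟩
      have hRx' : R.1 = x.1 := hRx
      have hy1 : (R + ε • ((0:ℝ), (1:ℝ))).1 = x.1 := by
        simp [hRx']
      have hle := hRmax ⟨hyT, hy1⟩
      have h2e : (R + ε • ((0:ℝ), (1:ℝ))).2 = R.2 + ε := by
        simp
      simp only [IsMaxOn, IsMaxFilter] at hle
      have hle2 : (R + ε • ((0:ℝ), (1:ℝ))).2 ≤ R.2 := hle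
      rw [h2e] at hle2
      linarith

lemma planar (A B C D : ℝ × ℝ)
    (h1 : ∀ x ∈ convexHull ℝ ({A, B, C} : Set (ℝ × ℝ)), x.2 < x.1 ^ 2)
    (h2 : ∀ x ∈ convexHull ℝ ({A, B, D} : Set (ℝ × ℝ)), x.2 < x.1 ^ 2)
    (h3 : ∀ x ∈ convexHull ℝ ({A, C, D} : Set (ℝ × ℝ)), x.2 < x.1 ^ 2) :
    ∀ x ∈ convexHull ℝ ({A, B, C, D} : Set (ℝ × ℝ)), x.2 < x.1 ^ 2 := by
  have h4 : ∀ x ∈ convexHull ℝ ({B, C, D} : Set (ℝ × ℝ)), x.2 < x.1 ^ 2 := by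
    have hr : ({B, C, D} : Set (ℝ × ℝ)) = Set.range ![B, C, D] := by
      ext y; simp [Matrix.range_cons, Matrix.range_empty]; tauto
    rw [hr]
    refine key (by norm_num) ![B, C, D] ?_
    rintro w hw0 hw1 ⟨i, hi⟩
    fin_cases i
    · exact h3 _ (zero_weight_mem _ w hw0 hw1 0 hi {A, C, D}
        (fun j hj => by fin_cases j <;> first | exact absurd rfl hj | simp))
    · exact h2 _ (zero_weight_mem _ w hw0 hw1 1 hi {A, B, D}
        (fun j hj => by fin_cases j <;> first | exact absurd rfl hj | simp))
    · exact h1 _ (zero_weight_mem _ w hw0 hw1 2 hi {A, B, C}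
        (fun j hj => by fin_cases j <;> first | exact absurd rfl hj | simp))
  have hr4 : ({A, B, C, D} : Set (ℝ × ℝ)) = Set.range ![A, B, C, D] := by
    ext y; simp [Matrix.range_cons, Matrix.range_empty]; tauto
  rw [hr4]
  refine key (by norm_num) ![A, B, C, D] ?_
  rintro w hw0 hw1 ⟨i, hi⟩
  fin_cases i
  · exact h4 _ (zero_weight_mem _ w hw0 hw1 0 hi {B, C, D}
      (fun j hj => by fin_cases j <;> first | exact absurd rfl hj | simp))
  · exact h3 _ (zero_weight_mem _ w hw0 hw1 1 hi {A, C, D}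
      (fun j hj => by fin_cases j <;> first | exact absurd rfl hj | simp))
  · exact h2 _ (zero_weight_mem _ w hw0 hw1 2 hi {A, B, D}
      (fun j hj => by fin_cases j <;> first | exact absurd rfl hj | simp))
  · exact h1 _ (zero_weight_mem _ w hw0 hw1 3 hi {A, B, C}
      (fun j hj => by fin_cases j <;> first | exact absurd rfl hj | simp))


lemma face_transfer {k : ℕ} (v : Fin k → EuclideanSpace ℝ (Fin 4))
    (h : convexHull ℝ (Set.range v) ⊆ {p : EuclideanSpace ℝ (Fin 4) | p 1 < (p 0) ^ 2}) :
    ∀ y ∈ convexHull ℝ (Set.range fun i => ((v i 0, v i 1) : ℝ × ℝ)), y.2 < y.1 ^ 2 := by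
  intro y hy
  obtain ⟨w, hw0, hw1, rfl⟩ := (mem_hull_iff _ y).1 hy
  have hz : (∑ i, w i • v i) ∈ {p : EuclideanSpace ℝ (Fin 4) | p 1 < (p 0) ^ 2} :=
    h ((mem_hull_iff v _).2 ⟨w, hw0, hw1, rfl⟩)
  have h0 : (∑ i, w i • (((v i 0 : ℝ), (v i 1 : ℝ)) : ℝ × ℝ)).1 = (∑ i, w i • v i) 0 := by
    rw [Prod.fst_sum, esum_apply]
    simp
  have h1 : (∑ i, w i • (((v i 0 : ℝ), (v i 1 : ℝ)) : ℝ × ℝ)).2 = (∑ i, w i • v i) 1 := by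
    rw [Prod.snd_sum, esum_apply]
    simp
  rw [h0, h1]
  exact hz

end Aux

/-- An open set `Ω ⊆ ℝⁿ` is two-convex if for any 3-simplex (convex hull of four
affinely independent points), if three of its 2-dimensional faces are contained in `Ω`,
then the whole simplex is contained in `Ω`. -/
def TwoConvex {n : ℕ} (Ω : Set (EuclideanSpace ℝ (Fin n))) : Prop :=
  ∀ a b c d : EuclideanSpace ℝ (Fin n), AffineIndependent ℝ ![a, b, c, d] →
    convexHull ℝ {a, b, c} ⊆ Ω → convexHull ℝ {a, b, d} ⊆ Ω →
    convexHull ℝ {a, c, d} ⊆ Ω →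
    convexHull ℝ {a, b, c, d} ⊆ Ω

/-- The set `Π = {(x,y,z,t) ∈ ℝ⁴ : y < x²}` is open and two-convex. -/
theorem stmt_1 :
    IsOpen {p : EuclideanSpace ℝ (Fin 4) | p 1 < (p 0) ^ 2} ∧
      TwoConvex {p : EuclideanSpace ℝ (Fin 4) | p 1 < (p 0) ^ 2} := by
  constructor
  · have h1 : Continuous fun p : EuclideanSpace ℝ (Fin 4) => p 1 :=
      (EuclideanSpace.proj (1 : Fin 4) : EuclideanSpace ℝ (Fin 4) →L[ℝ] ℝ).continuous
    have h0 : Continuous fun p : EuclideanSpace ℝ (Fin 4) => p 0 :=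
      (EuclideanSpace.proj (0 : Fin 4) : EuclideanSpace ℝ (Fin 4) →L[ℝ] ℝ).continuous
    exact isOpen_lt h1 (by fun_prop)
  · intro a b c d _ h1 h2 h3
    set A : ℝ × ℝ := (a 0, a 1) with hA
    set B : ℝ × ℝ := (b 0, b 1) with hB
    set C : ℝ × ℝ := (c 0, c 1) with hC
    set D : ℝ × ℝ := (d 0, d 1) with hD
    have habc : Set.range ![a, b, c] = {a, b, c} := by
      ext y; simp [Matrix.range_cons, Matrix.range_empty]; tauto
    have habd : Set.range ![a, b, d] = {a, b, d} := by
      ext y; simp [Matrix.range_cons, Matrix.range_empty]; tauto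
    have hacd : Set.range ![a, c, d] = {a, c, d} := by
      ext y; simp [Matrix.range_cons, Matrix.range_empty]; tauto
    have habcd : Set.range ![a, b, c, d] = {a, b, c, d} := by
      ext y; simp [Matrix.range_cons, Matrix.range_empty]; tauto
    have e1 : (fun i => ((![a, b, c] i 0, ![a, b, c] i 1) : ℝ × ℝ)) = ![A, B, C] := by
      funext i; fin_cases i <;> simp [hA, hB, hC]
    have e2 : (fun i => ((![a, b, d] i 0, ![a, b, d] i 1) : ℝ × ℝ)) = ![A, B, D] := by
      funext i; fin_cases i <;> simp [hA, hB, hD]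
    have e3 : (fun i => ((![a, c, d] i 0, ![a, c, d] i 1) : ℝ × ℝ)) = ![A, C, D] := by
      funext i; fin_cases i <;> simp [hA, hC, hD]
    have e4 : (fun i => ((![a, b, c, d] i 0, ![a, b, c, d] i 1) : ℝ × ℝ)) = ![A, B, C, D] := by
      funext i; fin_cases i <;> simp [hA, hB, hC, hD]
    have rABC : Set.range ![A, B, C] = {A, B, C} := by
      ext y; simp [Matrix.range_cons, Matrix.range_empty]; tauto
    have rABD : Set.range ![A, B, D] = {A, B, D} := by
      ext y; simp [Matrix.range_cons, Matrix.range_empty]; tauto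
    have rACD : Set.range ![A, C, D] = {A, C, D} := by
      ext y; simp [Matrix.range_cons, Matrix.range_empty]; tauto
    have rABCD : Set.range ![A, B, C, D] = {A, B, C, D} := by
      ext y; simp [Matrix.range_cons, Matrix.range_empty]; tauto
    have H1 : ∀ y ∈ convexHull ℝ ({A, B, C} : Set (ℝ × ℝ)), y.2 < y.1 ^ 2 := by
      have := face_transfer ![a, b, c] (by rw [habc]; exact h1)
      rwa [e1, rABC] at this
    have H2 : ∀ y ∈ convexHull ℝ ({A, B, D} : Set (ℝ × ℝ)), y.2 < y.1 ^ 2 := by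
      have := face_transfer ![a, b, d] (by rw [habd]; exact h2)
      rwa [e2, rABD] at this
    have H3 : ∀ y ∈ convexHull ℝ ({A, C, D} : Set (ℝ × ℝ)), y.2 < y.1 ^ 2 := by
      have := face_transfer ![a, c, d] (by rw [hacd]; exact h3)
      rwa [e3, rACD] at this
    have H4 := planar A B C D H1 H2 H3
    intro x hx
    rw [← habcd] at hx
    obtain ⟨w, hw0, hw1, rfl⟩ := (mem_hull_iff _ x).1 hx
    have hX : (∑ i, w i • (((![a, b, c, d] i 0 : ℝ), (![a, b, c, d] i 1 : ℝ)) : ℝ × ℝ))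
        ∈ convexHull ℝ ({A, B, C, D} : Set (ℝ × ℝ)) := by
      rw [← rABCD, ← e4]
      exact (mem_hull_iff _ _).2 ⟨w, hw0, hw1, rfl⟩
    have := H4 _ hX
    have hf : (∑ i, w i • (((![a, b, c, d] i 0 : ℝ), (![a, b, c, d] i 1 : ℝ)) : ℝ × ℝ)).1
        = (∑ i, w i • ![a, b, c, d] i) 0 := by
      rw [Prod.fst_sum, esum_apply]; simp
    have hs : (∑ i, w i • (((![a, b, c, d] i 0 : ℝ), (![a, b, c, d] i 1 : ℝ)) : ℝ × ℝ)).2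
        = (∑ i, w i • ![a, b, c, d] i) 1 := by
      rw [Prod.snd_sum, esum_apply]; simp
    rw [hf, hs] at this
    exact this
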